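/- If α + 1 > 2kt with t ≥ 0 and k a nonnegative integer, then |L_k^α(t)| ≥ (1/2) · Γ(k+α+1)/(Γ(k+1)Γ(α+1)). -/

import Mathlib

open scoped BigOperators

noncomputable def genBinom (x : ℝ) (m : ℕ) : ℝ :=
  (∏ i ∈ Finset.range m, (x - i)) / (m.factorial : ℝ)

noncomputable def laguerre (k : ℕ) (α : ℝ) (t : ℝ) : ℝ :=
  ∑ j ∈ Finset.range (k + 1),
    (-1 : ℝ) ^ j * genBinom ((k : ℝ) + α) (k - j) * t ^ j / (j.factorial : ℝ)

/-- Alternating sums of nonnegative decreasing sequences lie in `[0, a 0]`. -/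
lemma alt_sum_bound : ∀ (n : ℕ) (a : ℕ → ℝ), (∀ j, 0 ≤ a j) → (∀ j, a (j + 1) ≤ a j) →
    0 ≤ ∑ j ∈ Finset.range n, (-1 : ℝ) ^ j * a j ∧
      ∑ j ∈ Finset.range n, (-1 : ℝ) ^ j * a j ≤ a 0 := by
  intro n
  induction n with
  | zero => intro a h0 _; simpa using h0 0
  | succ n ih =>
    intro a h0 hd
    obtain ⟨h1, h2⟩ := ih (fun j => a (j + 1)) (fun j => h0 _) (fun j => hd _)
    have hsum : ∑ j ∈ Finset.range (n + 1), (-1 : ℝ) ^ j * a j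
        = a 0 - ∑ j ∈ Finset.range n, (-1 : ℝ) ^ j * a (j + 1) := by
      rw [Finset.sum_range_succ']
      have e : ∑ j ∈ Finset.range n, (-1 : ℝ) ^ (j + 1) * a (j + 1)
          = -∑ j ∈ Finset.range n, (-1 : ℝ) ^ j * a (j + 1) := by
        rw [← Finset.sum_neg_distrib]
        exact Finset.sum_congr rfl (fun j _ => by ring)
      rw [e, pow_zero, one_mul]
      ring
    have hd0 := hd 0
    refine ⟨by rw [hsum]; linarith, by rw [hsum]; linarith⟩

lemma genBinom_succ (x : ℝ) (m : ℕ) :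
    genBinom x (m + 1) = genBinom x m * (x - m) / (m + 1) := by
  unfold genBinom
  rw [Finset.prod_range_succ, Nat.factorial_succ]
  have h1 : (m.factorial : ℝ) ≠ 0 := Nat.cast_ne_zero.mpr m.factorial_ne_zero
  have h2 : ((m : ℝ) + 1) ≠ 0 := by positivity
  have h3 : (((m + 1) * m.factorial : ℕ) : ℝ) = ((m : ℝ) + 1) * (m.factorial : ℝ) := by
    push_cast; ring
  rw [h3, div_mul_eq_mul_div, div_div, mul_comm ((m.factorial : ℝ)) ((m : ℝ) + 1)]

lemma genBinom_pos (k m : ℕ) (α : ℝ) (hα : -1 < α) (hm : m ≤ k) :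
    0 < genBinom ((k : ℝ) + α) m := by
  unfold genBinom
  apply div_pos
  · apply Finset.prod_pos
    intro i hi
    have : i < m := Finset.mem_range.mp hi
    have : (i : ℝ) ≤ (k : ℝ) - 1 := by
      have : i + 1 ≤ k := lt_of_lt_of_le this hm
      have := Nat.cast_le (α := ℝ).mpr this
      push_cast at this; linarith
    linarith
  · exact_mod_cast m.factorial_pos

lemma gamma_prod (α : ℝ) (hα : -1 < α) : ∀ k : ℕ,
    Real.Gamma (α + 1 + k) = Real.Gamma (α + 1) * ∏ i ∈ Finset.range k, (α + 1 + i) := by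
  intro k
  induction k with
  | zero => simp
  | succ n ih =>
    have hnn : (0 : ℝ) ≤ (n : ℝ) := Nat.cast_nonneg n
    have hne : α + 1 + n ≠ 0 := by intro hc; linarith [hc]
    have : Real.Gamma (α + 1 + (n + 1 : ℕ)) = (α + 1 + n) * Real.Gamma (α + 1 + n) := by
      rw [show α + 1 + ((n + 1 : ℕ) : ℝ) = (α + 1 + n) + 1 by push_cast; ring]
      exact Real.Gamma_add_one hne
    rw [this, ih, Finset.prod_range_succ]
    ring

lemma genBinom_top (k : ℕ) (α : ℝ) (hα : -1 < α) :
    genBinom ((k : ℝ) + α) k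
      = Real.Gamma ((k : ℝ) + α + 1) / (Real.Gamma ((k : ℝ) + 1) * Real.Gamma (α + 1)) := by
  have hprod : ∏ i ∈ Finset.range k, ((k : ℝ) + α - i) = ∏ i ∈ Finset.range k, (α + 1 + i) := by
    rw [← Finset.prod_range_reflect (fun i => α + 1 + (i : ℕ)) k]
    apply Finset.prod_congr rfl
    intro j hj
    have hj' : j < k := Finset.mem_range.mp hj
    have h1 : ((k - 1 - j : ℕ) : ℝ) = (k : ℝ) - 1 - j := by
      have : j ≤ k - 1 := Nat.le_sub_one_of_lt hj'
      rw [Nat.cast_sub this, Nat.cast_sub (Nat.one_le_iff_ne_zero.mpr (by omega))]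
      simp
    simp only [h1]
    ring
  have hG : Real.Gamma ((k : ℝ) + α + 1) = Real.Gamma (α + 1 + k) := by
    congr 1; ring
  have hk1 : Real.Gamma ((k : ℝ) + 1) = (k.factorial : ℝ) := by
    rw [show (k : ℝ) + 1 = ((k : ℕ) : ℝ) + 1 by norm_num]
    exact_mod_cast Real.Gamma_nat_eq_factorial k
  have hGpos : 0 < Real.Gamma (α + 1) := Real.Gamma_pos_of_pos (by linarith)
  unfold genBinom
  rw [hprod, hG, gamma_prod α hα k, hk1]
  have hfne : (k.factorial : ℝ) ≠ 0 := Nat.cast_ne_zero.mpr k.factorial_ne_zero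
  field_simp

/-- If `α + 1 > 2kt` with `t ≥ 0`, then
`|L_k^α(t)| ≥ (1/2) Γ(k+α+1)/(Γ(k+1)Γ(α+1))`. -/
theorem stmt9 (k : ℕ) (α t : ℝ) (hα : -1 < α) (ht : 0 ≤ t)
    (h : 2 * (k : ℝ) * t < α + 1) :
    (1 / 2) * (Real.Gamma ((k : ℝ) + α + 1)
        / (Real.Gamma ((k : ℝ) + 1) * Real.Gamma (α + 1)))
      ≤ |laguerre k α t| := by
  set A : ℕ → ℝ := fun j =>
    if j ≤ k then genBinom ((k : ℝ) + α) (k - j) * t ^ j / (j.factorial : ℝ) else 0 with hA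
  have hApos : ∀ j, 0 ≤ A j := by
    intro j
    simp only [hA]
    split
    · have := genBinom_pos k (k - j) α hα (Nat.sub_le k j)
      have hf : (0 : ℝ) < (j.factorial : ℝ) := by exact_mod_cast j.factorial_pos
      positivity
    · exact le_refl 0
  -- the key: each term is at most half the previous one
  have hstep : ∀ j, 2 * A (j + 1) ≤ A j := by
    intro j
    by_cases hjk : j + 1 ≤ k
    · have hjk' : j ≤ k := Nat.le_of_succ_le hjk
      have e1 : k - j = (k - (j + 1)) + 1 := by omega
      have hcast : ((k - (j + 1) : ℕ) : ℝ) = (k : ℝ) - j - 1 := by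
        rw [Nat.cast_sub hjk]; push_cast; ring
      set m := k - (j + 1) with hm
      set g := genBinom ((k : ℝ) + α) m with hg
      have hgpos : 0 < g := genBinom_pos k m α hα (by omega)
      have hAj : A j = g * ((k : ℝ) + α - m) / (m + 1) * t ^ j / (j.factorial : ℝ) := by
        simp only [hA, if_pos hjk', e1, genBinom_succ]
        rfl
      have hAj1 : A (j + 1) = g * t ^ (j + 1) / ((j + 1).factorial : ℝ) := by
        simp only [hA, if_pos hjk]
        rfl
      have hfpos : (0 : ℝ) < (j.factorial : ℝ) := by exact_mod_cast j.factorial_pos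
      have hm1 : ((m : ℝ) + 1) = (k : ℝ) - j := by rw [hcast]; ring
      have hxm : (k : ℝ) + α - m = α + j + 1 := by rw [hcast]; ring
      have hkj : (1 : ℝ) ≤ (k : ℝ) - j := by
        have := Nat.cast_le (α := ℝ).mpr hjk
        push_cast at this; linarith
      have hjpos : (0 : ℝ) ≤ (j : ℝ) := Nat.cast_nonneg j
      have htj : (0 : ℝ) ≤ t ^ j := pow_nonneg ht j
      have hkR : ((k : ℝ) - j) ≤ (k : ℝ) := by linarith
      have hkey : 2 * (((k : ℝ) - j) * t) ≤ (α + j + 1) * ((j : ℝ) + 1) := by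
        have h1 : 2 * (((k : ℝ) - j) * t) ≤ 2 * ((k : ℝ) * t) := by nlinarith
        have h2 : (α + 1) ≤ (α + j + 1) * ((j : ℝ) + 1) := by nlinarith
        linarith
      have hc2 : (((j + 1).factorial : ℕ) : ℝ) = ((j : ℝ) + 1) * (j.factorial : ℝ) := by
        rw [Nat.factorial_succ]; push_cast; ring
      have hkj0 : (0 : ℝ) < (k : ℝ) - j := by linarith
      have hfne : (j.factorial : ℝ) ≠ 0 := ne_of_gt hfpos
      have key : A j - 2 * A (j + 1)
          = g * t ^ j / ((j.factorial : ℝ) * (((k : ℝ) - j) * ((j : ℝ) + 1)))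
            * ((α + (j : ℝ) + 1) * ((j : ℝ) + 1) - 2 * (((k : ℝ) - j) * t)) := by
        rw [hAj, hAj1, hm1, hxm, hc2, pow_succ]
        field_simp
      have h1 : 0 ≤ g * t ^ j / ((j.factorial : ℝ) * (((k : ℝ) - j) * ((j : ℝ) + 1))) := by
        apply div_nonneg (mul_nonneg hgpos.le htj)
        have : (0 : ℝ) < (j : ℝ) + 1 := by linarith
        positivity
      have h2 : 0 ≤ (α + (j : ℝ) + 1) * ((j : ℝ) + 1) - 2 * (((k : ℝ) - j) * t) := by
        linarith
      have := mul_nonneg h1 h2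
      rw [← key] at this
      linarith
    · have : A (j + 1) = 0 := by simp only [hA, if_neg hjk]
      rw [this]
      simpa using hApos j
  have hdec : ∀ j, A (j + 1) ≤ A j := fun j => by
    have := hstep j; have := hApos (j + 1); linarith
  -- rewrite laguerre as alternating sum of A
  have hlag : laguerre k α t = ∑ j ∈ Finset.range (k + 1), (-1 : ℝ) ^ j * A j := by
    unfold laguerre
    apply Finset.sum_congr rfl
    intro j hj
    have hj' : j ≤ k := Nat.lt_succ_iff.mp (Finset.mem_range.mp hj)
    simp only [hA, if_pos hj']
    ring
  have hsplit : ∑ j ∈ Finset.range (k + 1), (-1 : ℝ) ^ j * A j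
      = A 0 - ∑ j ∈ Finset.range k, (-1 : ℝ) ^ j * A (j + 1) := by
    rw [Finset.sum_range_succ']
    have e : ∑ j ∈ Finset.range k, (-1 : ℝ) ^ (j + 1) * A (j + 1)
        = -∑ j ∈ Finset.range k, (-1 : ℝ) ^ j * A (j + 1) := by
      rw [← Finset.sum_neg_distrib]
      exact Finset.sum_congr rfl (fun j _ => by ring)
    rw [e, pow_zero, one_mul]
    ring
  obtain ⟨hT0, hT1⟩ := alt_sum_bound k (fun j => A (j + 1)) (fun j => hApos _) (fun j => hdec _)
  have hA1 : A 1 ≤ A 0 / 2 := by have := hstep 0; linarith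
  have hS : A 0 / 2 ≤ laguerre k α t := by
    rw [hlag, hsplit]; linarith
  have hA0 : A 0 = Real.Gamma ((k : ℝ) + α + 1)
      / (Real.Gamma ((k : ℝ) + 1) * Real.Gamma (α + 1)) := by
    simp only [hA, if_pos (Nat.zero_le k), Nat.sub_zero, pow_zero, Nat.factorial_zero,
      Nat.cast_one, mul_one, div_one]
    exact genBinom_top k α hα
  calc (1 / 2) * (Real.Gamma ((k : ℝ) + α + 1)
        / (Real.Gamma ((k : ℝ) + 1) * Real.Gamma (α + 1))) = A 0 / 2 := by rw [hA0]; ring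
    _ ≤ laguerre k α t := hS
    _ ≤ |laguerre k α t| := le_abs_self _
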